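/- For integers s ≥ 1, q ≥ 2 and n ≥ 2s+1, the sum [n-1 choose s]_q + [n-1 choose s-1]_q + ... + [n-1 choose 0]_q is strictly less than [n choose s]_q. -/

import Mathlib

open Finset

/-- The Gaussian (q-)binomial coefficient. -/
def gaussBinom (q n k : ℕ) : ℚ :=
  ∏ i ∈ Finset.range k, ((q : ℚ) ^ (n - i) - 1) / ((q : ℚ) ^ (k - i) - 1)

lemma gauss_div (q m k : ℕ) :
    gaussBinom q m k =
      (∏ i ∈ range k, ((q:ℚ)^(m-i) - 1)) / (∏ j ∈ range k, ((q:ℚ)^(j+1) - 1)) := by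
  rw [gaussBinom, Finset.prod_div_distrib]
  congr 1
  rw [← Finset.prod_range_reflect (fun j => (q:ℚ)^(j+1) - 1) k]
  refine Finset.prod_congr rfl fun i hi => ?_
  simp only [mem_range] at hi
  congr 2
  omega

lemma gauss_step (q m k : ℕ) :
    gaussBinom q m (k+1) = gaussBinom q m k * (((q:ℚ)^(m-k) - 1) / ((q:ℚ)^(k+1) - 1)) := by
  rw [gauss_div, gauss_div, Finset.prod_range_succ, Finset.prod_range_succ,
    ← div_mul_div_comm]

lemma gauss_shift (q n k : ℕ) :
    gaussBinom q n (k+1) = ((q:ℚ)^n - 1) / ((q:ℚ)^(k+1) - 1) * gaussBinom q (n-1) k := by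
  rw [gauss_div, gauss_div, Finset.prod_range_succ' (fun i => (q:ℚ)^(n-i) - 1) k,
    Finset.prod_range_succ]
  rw [mul_comm (((q:ℚ)^n - 1) / _), ← div_mul_div_comm]
  simp only [Nat.sub_zero]
  have hnum : (∏ i ∈ Finset.range k, ((q:ℚ)^(n-(i+1)) - 1))
      = ∏ i ∈ Finset.range k, ((q:ℚ)^((n-1)-i) - 1) :=
    Finset.prod_congr rfl fun i _ => by congr 2; omega
  rw [hnum]

lemma one_lt_q_pow {q e : ℕ} (hq : 2 ≤ q) (he : e ≠ 0) : (1:ℚ) < (q:ℚ)^e := by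
  have h1 : (1:ℚ) < q := by exact_mod_cast hq.trans_lt' one_lt_two
  exact one_lt_pow₀ h1 he

lemma gauss_pos {q m k : ℕ} (hq : 2 ≤ q) (hkm : k ≤ m) : 0 < gaussBinom q m k := by
  rw [gaussBinom]
  refine Finset.prod_pos fun i hi => ?_
  simp only [mem_range] at hi
  apply div_pos <;> rw [sub_pos]
  · exact one_lt_q_pow hq (by omega)
  · exact one_lt_q_pow hq (by omega)

lemma gauss_pascal {q n k : ℕ} (hq : 2 ≤ q) (h : k + 2 ≤ n) :
    gaussBinom q n (k+1)
      = (q:ℚ)^(k+1) * gaussBinom q (n-1) (k+1) + gaussBinom q (n-1) k := by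
  rw [gauss_shift, gauss_step]
  have hA : ((q:ℚ)^(k+1) - 1) ≠ 0 := by
    have := one_lt_q_pow (e := k+1) hq (by omega)
    linarith
  have hpow : (q:ℚ)^((n-1)-k) * (q:ℚ)^(k+1) = (q:ℚ)^n := by
    rw [← pow_add]; congr 1; omega
  field_simp
  linear_combination (-(gaussBinom q (n-1) k)) * hpow

lemma gauss_mono_step {q m k : ℕ} (hq : 2 ≤ q) (h : 2*k + 1 ≤ m) :
    gaussBinom q m k ≤ gaussBinom q m (k+1) := by
  rw [gauss_step]
  have hpos := gauss_pos (k := k) (m := m) hq (by omega)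
  refine le_mul_of_one_le_right hpos.le ?_
  rw [le_div_iff₀ (by have := one_lt_q_pow (e := k+1) hq (by omega); linarith), one_mul]
  have : (q:ℚ)^(k+1) ≤ (q:ℚ)^(m-k) := by
    apply pow_le_pow_right₀ (by exact_mod_cast Nat.one_le_iff_ne_zero.mpr (by omega))
    omega
  linarith

lemma gauss_mono {q m : ℕ} (hq : 2 ≤ q) :
    ∀ s i : ℕ, i ≤ s → 2*s ≤ m → gaussBinom q m i ≤ gaussBinom q m s := by
  intro s
  induction s with
  | zero => intro i hi _; interval_cases i; rfl
  | succ t ih =>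
    intro i hi h2
    rcases Nat.eq_or_lt_of_le hi with rfl | hlt
    · rfl
    · exact (ih i (by omega) (by omega)).trans (gauss_mono_step hq (by omega))

theorem gaussBinom_sum_lt (q n s : ℕ) (hs : 1 ≤ s) (hq : 2 ≤ q) (hn : 2 * s + 1 ≤ n) :
    ∑ i ∈ Finset.range (s + 1), gaussBinom q (n - 1) i < gaussBinom q n s := by
  obtain ⟨t, rfl⟩ : ∃ t, s = t + 1 := ⟨s - 1, by omega⟩
  rw [Finset.sum_range_succ, Finset.sum_range_succ,
    show gaussBinom q n (t+1) = _ from gauss_pascal hq (by omega : t + 2 ≤ n)]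
  set G := gaussBinom q (n-1) (t+1) with hGdef
  have hG : 0 < G := gauss_pos hq (by omega)
  have hsum : ∑ i ∈ range t, gaussBinom q (n-1) i ≤ (t:ℚ) * G := by
    calc ∑ i ∈ range t, gaussBinom q (n-1) i
        ≤ ∑ _i ∈ range t, G := by
          refine Finset.sum_le_sum fun i hi => ?_
          simp only [mem_range] at hi
          exact gauss_mono hq (t+1) i (by omega) (by omega)
      _ = (t:ℚ) * G := by simp [mul_comm]
  have hqt : (t:ℚ) + 1 < (q:ℚ)^(t+1) := by
    have h1 : t + 1 < 2^(t+1) := Nat.lt_two_pow_self (n := t+1)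
    have h2 : 2^(t+1) ≤ q^(t+1) := Nat.pow_le_pow_left hq (t+1)
    have : (t:ℚ) + 1 < ((2^(t+1) : ℕ) : ℚ) := by exact_mod_cast h1
    calc (t:ℚ) + 1 < ((2^(t+1):ℕ):ℚ) := this
      _ ≤ (q:ℚ)^(t+1) := by exact_mod_cast h2
  have key : ((t:ℚ) + 1) * G < (q:ℚ)^(t+1) * G := mul_lt_mul_of_pos_right hqt hG
  linarith
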